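/- Characterization of population DPO minimizers under partial coverage (Appendix E): fix η > 0, a finite action set A, a subset S* ⊆ A, and probability distributions π0, π*, π_off on A such that π0 and π* have support exactly S* and supp(π_off) ⊆ S*. For distributions π_θ on A with support S*, define p^θ(a¹,a²) = σ( η·log(π_θ(a¹)/π0(a¹)) − η·log(π_θ(a²)/π0(a²)) ) and p*(a¹,a²) analogously with π*, and the population loss L_∞(π_θ) = −E_{a¹,a² ∼ π_off ⊗ π_off}[ p*(a¹,a²)·log p^θ(a¹,a²) + p*(a²,a¹)·log p^θ(a²,a¹) ]. If π_θ minimizes L_∞ over all distributions with support S*, then there exists a constant C > 0 such that π_θ(a) = C·π*(a) for all a ∈ supp(π_off); in particular, if supp(π_off) = S*, then π_θ = π*. -/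

import Mathlib

open Finset

/-- The sigmoid function σ(z) = 1 / (1 + exp(−z)). -/
noncomputable def sigmoid (z : ℝ) : ℝ := 1 / (1 + Real.exp (-z))

/-- The implicit preference probability of policy `q` (against reference `pi0`,
with KL coefficient `η`) that response `a1` is preferred to `a2`. -/
noncomputable def prefProb {A : Type*} (η : ℝ) (pi0 q : A → ℝ) (a1 a2 : A) : ℝ :=
  sigmoid (η * Real.log (q a1 / pi0 a1) - η * Real.log (q a2 / pi0 a2))

lemma sigmoid_pos (z : ℝ) : 0 < sigmoid z := by unfold sigmoid; positivity

lemma sigmoid_lt_one (z : ℝ) : sigmoid z < 1 := by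
  unfold sigmoid
  rw [div_lt_one (by positivity)]
  linarith [Real.exp_pos (-z)]

lemma sigmoid_neg (z : ℝ) : sigmoid (-z) = 1 - sigmoid z := by
  unfold sigmoid
  rw [neg_neg, Real.exp_neg]
  have h := Real.exp_pos z
  field_simp
  ring

lemma sigmoid_inj {a b : ℝ} (h : sigmoid a = sigmoid b) : a = b := by
  unfold sigmoid at h
  have ha := Real.exp_pos (-a); have hb := Real.exp_pos (-b)
  have ha' : (1:ℝ) + Real.exp (-a) ≠ 0 := by positivity
  have hb' : (1:ℝ) + Real.exp (-b) ≠ 0 := by positivity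
  rw [div_eq_div_iff ha' hb'] at h
  have : Real.exp (-a) = Real.exp (-b) := by linarith
  have := Real.exp_injective this
  linarith

lemma gibbs_le {p q : ℝ} (hp0 : 0 < p) (hp1 : p < 1) (hq0 : 0 < q) (hq1 : q < 1) :
    p * Real.log q + (1 - p) * Real.log (1 - q)
      ≤ p * Real.log p + (1 - p) * Real.log (1 - p) := by
  have h1 : Real.log (q / p) ≤ q / p - 1 := Real.log_le_sub_one_of_pos (div_pos hq0 hp0)
  have h2 : Real.log ((1 - q) / (1 - p)) ≤ (1 - q) / (1 - p) - 1 :=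
    Real.log_le_sub_one_of_pos (div_pos (by linarith) (by linarith))
  rw [Real.log_div hq0.ne' hp0.ne'] at h1
  rw [Real.log_div (by linarith : (1:ℝ) - q ≠ 0) (by linarith : (1:ℝ) - p ≠ 0)] at h2
  have e1 : p * (q / p - 1) = q - p := by field_simp
  have e2 : (1 - p) * ((1 - q) / (1 - p) - 1) = p - q := by
    have : (1:ℝ) - p ≠ 0 := by linarith
    field_simp
    ring
  nlinarith [mul_le_mul_of_nonneg_left h1 hp0.le,
    mul_le_mul_of_nonneg_left h2 (by linarith : (0:ℝ) ≤ 1 - p)]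

lemma gibbs_eq {p q : ℝ} (hp0 : 0 < p) (hp1 : p < 1) (hq0 : 0 < q) (hq1 : q < 1)
    (h : p * Real.log q + (1 - p) * Real.log (1 - q)
         = p * Real.log p + (1 - p) * Real.log (1 - p)) : q = p := by
  by_contra hne
  have hne' : q / p ≠ 1 := by
    intro hc
    exact hne ((div_eq_one_iff_eq hp0.ne').mp hc)
  have h1 : Real.log (q / p) < q / p - 1 :=
    Real.log_lt_sub_one_of_pos (div_pos hq0 hp0) hne'
  have h2 : Real.log ((1 - q) / (1 - p)) ≤ (1 - q) / (1 - p) - 1 :=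
    Real.log_le_sub_one_of_pos (div_pos (by linarith) (by linarith))
  rw [Real.log_div hq0.ne' hp0.ne'] at h1
  rw [Real.log_div (by linarith : (1:ℝ) - q ≠ 0) (by linarith : (1:ℝ) - p ≠ 0)] at h2
  have e1 : p * (q / p - 1) = q - p := by field_simp
  have e2 : (1 - p) * ((1 - q) / (1 - p) - 1) = p - q := by
    have : (1:ℝ) - p ≠ 0 := by linarith
    field_simp
    ring
  nlinarith [mul_lt_mul_of_pos_left h1 hp0,
    mul_le_mul_of_nonneg_left h2 (by linarith : (0:ℝ) ≤ 1 - p)]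

lemma prefProb_swap {A : Type*} (η : ℝ) (pi0 q : A → ℝ) (a1 a2 : A) :
    prefProb η pi0 q a2 a1 = 1 - prefProb η pi0 q a1 a2 := by
  unfold prefProb
  rw [show η * Real.log (q a2 / pi0 a2) - η * Real.log (q a1 / pi0 a1)
      = -(η * Real.log (q a1 / pi0 a1) - η * Real.log (q a2 / pi0 a2)) by ring]
  exact sigmoid_neg _

/-- The inner term of the DPO population loss. -/
noncomputable def dpoTerm {A : Type*} (η : ℝ) (pi0 pistar q : A → ℝ) (a1 a2 : A) : ℝ :=
  prefProb η pi0 pistar a1 a2 * Real.log (prefProb η pi0 q a1 a2)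
    + prefProb η pi0 pistar a2 a1 * Real.log (prefProb η pi0 q a2 a1)

lemma dpoTerm_le {A : Type*} (η : ℝ) (pi0 pistar q : A → ℝ) (a1 a2 : A) :
    dpoTerm η pi0 pistar q a1 a2 ≤ dpoTerm η pi0 pistar pistar a1 a2 := by
  unfold dpoTerm
  rw [prefProb_swap η pi0 pistar a1 a2, prefProb_swap η pi0 q a1 a2]
  exact gibbs_le (sigmoid_pos _) (sigmoid_lt_one _) (sigmoid_pos _) (sigmoid_lt_one _)

lemma dpoTerm_eq {A : Type*} (η : ℝ) (pi0 pistar q : A → ℝ) (a1 a2 : A)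
    (h : dpoTerm η pi0 pistar q a1 a2 = dpoTerm η pi0 pistar pistar a1 a2) :
    prefProb η pi0 q a1 a2 = prefProb η pi0 pistar a1 a2 := by
  unfold dpoTerm at h
  rw [prefProb_swap η pi0 pistar a1 a2, prefProb_swap η pi0 q a1 a2] at h
  exact gibbs_eq (sigmoid_pos _) (sigmoid_lt_one _) (sigmoid_pos _) (sigmoid_lt_one _) h

theorem dpo_population_minimizer_characterization
    {A : Type*} [Fintype A]
    (η : ℝ) (hη : 0 < η)
    (S : Finset A)
    (pi0 pistar pioff pith : A → ℝ)
    (hpi0 : ∀ a, 0 ≤ pi0 a) (hpi0sum : ∑ a, pi0 a = 1)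
    (hpi0supp : ∀ a, pi0 a ≠ 0 ↔ a ∈ S)
    (hpistar : ∀ a, 0 ≤ pistar a) (hpistarsum : ∑ a, pistar a = 1)
    (hpistarsupp : ∀ a, pistar a ≠ 0 ↔ a ∈ S)
    (hpioff : ∀ a, 0 ≤ pioff a) (hpioffsum : ∑ a, pioff a = 1)
    (hpioffsupp : ∀ a, pioff a ≠ 0 → a ∈ S)
    (hpith : ∀ a, 0 ≤ pith a) (hpithsum : ∑ a, pith a = 1)
    (hpithsupp : ∀ a, pith a ≠ 0 ↔ a ∈ S)
    (Linf : (A → ℝ) → ℝ)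
    (hLinf : ∀ q : A → ℝ, Linf q =
      - ∑ a1, ∑ a2, pioff a1 * pioff a2 *
          (prefProb η pi0 pistar a1 a2 * Real.log (prefProb η pi0 q a1 a2)
            + prefProb η pi0 pistar a2 a1 * Real.log (prefProb η pi0 q a2 a1)))
    (hmin : ∀ q : A → ℝ,
      ((∀ a, 0 ≤ q a) ∧ (∑ a, q a = 1) ∧ (∀ a, q a ≠ 0 ↔ a ∈ S)) →
        Linf pith ≤ Linf q) :
    (∃ C : ℝ, 0 < C ∧ ∀ a, pioff a ≠ 0 → pith a = C * pistar a)
    ∧ ((∀ a, pioff a ≠ 0 ↔ a ∈ S) → pith = pistar) := by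
  have hLinf' : ∀ q : A → ℝ, Linf q =
      - ∑ a1, ∑ a2, pioff a1 * pioff a2 * dpoTerm η pi0 pistar q a1 a2 := by
    intro q; rw [hLinf q]; rfl
  -- π* is a global minimizer of Linf
  have hstar_le : ∀ q : A → ℝ, Linf pistar ≤ Linf q := by
    intro q
    rw [hLinf' q, hLinf' pistar]
    apply neg_le_neg
    refine Finset.sum_le_sum fun a1 _ => Finset.sum_le_sum fun a2 _ => ?_
    exact mul_le_mul_of_nonneg_left (dpoTerm_le η pi0 pistar q a1 a2)
      (mul_nonneg (hpioff a1) (hpioff a2))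
  have hmin' : Linf pith = Linf pistar :=
    le_antisymm (hmin pistar ⟨hpistar, hpistarsum, hpistarsupp⟩) (hstar_le pith)
  -- sum of the (nonnegative) termwise gaps vanishes
  have hsums : ∑ a1, ∑ a2, pioff a1 * pioff a2 * dpoTerm η pi0 pistar pith a1 a2
      = ∑ a1, ∑ a2, pioff a1 * pioff a2 * dpoTerm η pi0 pistar pistar a1 a2 := by
    have := hmin'
    rw [hLinf' pith, hLinf' pistar] at this
    linarith
  have hsum0 : ∑ a1, ∑ a2, pioff a1 * pioff a2 *
      (dpoTerm η pi0 pistar pistar a1 a2 - dpoTerm η pi0 pistar pith a1 a2) = 0 := by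
    simp only [mul_sub, Finset.sum_sub_distrib]
    rw [hsums, sub_self]
  have hgap0 : ∀ b1 b2 : A, pioff b1 ≠ 0 → pioff b2 ≠ 0 →
      dpoTerm η pi0 pistar pith b1 b2 = dpoTerm η pi0 pistar pistar b1 b2 := by
    intro b1 b2 hb1 hb2
    have hnn : ∀ a1 a2 : A, 0 ≤ pioff a1 * pioff a2 *
        (dpoTerm η pi0 pistar pistar a1 a2 - dpoTerm η pi0 pistar pith a1 a2) :=
      fun a1 a2 => mul_nonneg (mul_nonneg (hpioff a1) (hpioff a2))
        (sub_nonneg.mpr (dpoTerm_le η pi0 pistar pith a1 a2))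
    have h1 := (Finset.sum_eq_zero_iff_of_nonneg
      (fun a1 _ => Finset.sum_nonneg fun a2 _ => hnn a1 a2)).mp hsum0 b1 (mem_univ b1)
    have h2 := (Finset.sum_eq_zero_iff_of_nonneg
      (fun a2 _ => hnn b1 a2)).mp h1 b2 (mem_univ b2)
    have hposw : 0 < pioff b1 * pioff b2 :=
      mul_pos (lt_of_le_of_ne (hpioff b1) (Ne.symm hb1))
        (lt_of_le_of_ne (hpioff b2) (Ne.symm hb2))
    have := (mul_eq_zero.mp h2).resolve_left hposw.ne'
    linarith [sub_eq_zero.mp this]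
  -- from equality of preference probabilities to the cross-ratio identity
  have hcross : ∀ b1 b2 : A, pioff b1 ≠ 0 → pioff b2 ≠ 0 →
      pith b1 * pistar b2 = pith b2 * pistar b1 := by
    intro b1 b2 hb1 hb2
    have hpp := dpoTerm_eq η pi0 pistar pith b1 b2 (hgap0 b1 b2 hb1 hb2)
    have harg : η * Real.log (pith b1 / pi0 b1) - η * Real.log (pith b2 / pi0 b2)
        = η * Real.log (pistar b1 / pi0 b1) - η * Real.log (pistar b2 / pi0 b2) :=
      sigmoid_inj hpp
    have hb1S := hpioffsupp b1 hb1
    have hb2S := hpioffsupp b2 hb2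
    have h01 : 0 < pi0 b1 := lt_of_le_of_ne (hpi0 b1) (Ne.symm ((hpi0supp b1).mpr hb1S))
    have h02 : 0 < pi0 b2 := lt_of_le_of_ne (hpi0 b2) (Ne.symm ((hpi0supp b2).mpr hb2S))
    have ht1 : 0 < pith b1 := lt_of_le_of_ne (hpith b1) (Ne.symm ((hpithsupp b1).mpr hb1S))
    have ht2 : 0 < pith b2 := lt_of_le_of_ne (hpith b2) (Ne.symm ((hpithsupp b2).mpr hb2S))
    have hs1 : 0 < pistar b1 := lt_of_le_of_ne (hpistar b1) (Ne.symm ((hpistarsupp b1).mpr hb1S))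
    have hs2 : 0 < pistar b2 := lt_of_le_of_ne (hpistar b2) (Ne.symm ((hpistarsupp b2).mpr hb2S))
    have harg' : Real.log (pith b1 / pi0 b1) - Real.log (pith b2 / pi0 b2)
        = Real.log (pistar b1 / pi0 b1) - Real.log (pistar b2 / pi0 b2) := by
      have hmul : η * (Real.log (pith b1 / pi0 b1) - Real.log (pith b2 / pi0 b2))
          = η * (Real.log (pistar b1 / pi0 b1) - Real.log (pistar b2 / pi0 b2)) := by
        linarith
      exact mul_left_cancel₀ hη.ne' hmul
    rw [Real.log_div ht1.ne' h01.ne', Real.log_div ht2.ne' h02.ne',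
      Real.log_div hs1.ne' h01.ne', Real.log_div hs2.ne' h02.ne'] at harg'
    have hlog : Real.log (pith b1 * pistar b2) = Real.log (pith b2 * pistar b1) := by
      rw [Real.log_mul ht1.ne' hs2.ne', Real.log_mul ht2.ne' hs1.ne']
      linarith
    have := congrArg Real.exp hlog
    rwa [Real.exp_log (mul_pos ht1 hs2), Real.exp_log (mul_pos ht2 hs1)] at this
  -- pick a point in the support of π_off
  have hex : ∃ a0 : A, pioff a0 ≠ 0 := by
    by_contra h
    push_neg at h
    rw [Finset.sum_eq_zero (fun a _ => h a)] at hpioffsum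
    norm_num at hpioffsum
  obtain ⟨a0, ha0⟩ := hex
  have ha0S := hpioffsupp a0 ha0
  have ht0 : 0 < pith a0 := lt_of_le_of_ne (hpith a0) (Ne.symm ((hpithsupp a0).mpr ha0S))
  have hs0 : 0 < pistar a0 := lt_of_le_of_ne (hpistar a0) (Ne.symm ((hpistarsupp a0).mpr ha0S))
  set C : ℝ := pith a0 / pistar a0 with hC
  have hCpos : 0 < C := div_pos ht0 hs0
  have hCa : ∀ a, pioff a ≠ 0 → pith a = C * pistar a := by
    intro a ha
    have h := hcross a a0 ha ha0
    rw [hC]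
    field_simp
    linarith
  refine ⟨⟨C, hCpos, hCa⟩, ?_⟩
  intro hS
  have hall : ∀ a, pith a = C * pistar a := by
    intro a
    by_cases haS : a ∈ S
    · exact hCa a ((hS a).mpr haS)
    · have h1 : pith a = 0 := by
        by_contra h; exact haS ((hpithsupp a).mp h)
      have h2 : pistar a = 0 := by
        by_contra h; exact haS ((hpistarsupp a).mp h)
      rw [h1, h2, mul_zero]
  have hC1 : C = 1 := by
    have h : ∑ a, pith a = ∑ a, C * pistar a :=
      Finset.sum_congr rfl fun a _ => hall a
    rw [hpithsum, ← Finset.mul_sum, hpistarsum, mul_one] at h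
    exact h.symm
  funext a
  rw [hall a, hC1, one_mul]
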